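/- Let r ≥ 2 be an integer radix, D ≥ 1, and m ≥ 1. Let (x_k)_{k∈ℕ} be a sequence in ℝ^m (equipped with the sup norm ‖·‖_∞) that is Fejér monotone with respect to the single point x ∈ ℝ^m, i.e. ‖x_{k+1} − x‖_∞ ≤ ‖x_k − x‖_∞ for all k, and assume |x_j| ≤ 1 − 2·r^{-D} for every coordinate j. If some element n satisfies ‖x_n − x‖_∞ ≤ r^{-D}/2, then for every coordinate j there exist symmetric maximally redundant signed-digit radix-r digit sequences d^{(k,j)} : ℕ → ℤ for each k ≥ n with |d^{(k,j)}_i| ≤ r − 1 for all i, (x_k)_j = Σ_{i=0}^∞ d^{(k,j)}_i · r^{-(i+1)}, and d^{(k,j)}_i = d^{(n,j)}_i for all i < D and all k ≥ n. -/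

import Mathlib

open Finset Filter

/-- base-`r` digit sum: `∑_{i<D} (A / r^i % r) r^i = A % r^D`. -/
lemma fm_digit_sum (r : ℕ) (hr : 2 ≤ r) :
    ∀ (D A : ℕ), ∑ i ∈ range D, A / r ^ i % r * r ^ i = A % r ^ D := by
  intro D
  induction D with
  | zero => intro A; simp [Nat.mod_one]
  | succ D ih =>
    intro A
    rw [Finset.sum_range_succ, ih]
    have hp : 0 < r ^ D := Nat.pow_pos (by omega)
    have h1 : A = r ^ (D + 1) * (A / r ^ D / r) + (A / r ^ D % r * r ^ D + A % r ^ D) := by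
      have h2 := Nat.div_add_mod A (r ^ D)
      have h3 := Nat.div_add_mod (A / r ^ D) r
      calc A = r ^ D * (A / r ^ D) + A % r ^ D := h2.symm
        _ = r ^ D * (r * (A / r ^ D / r) + A / r ^ D % r) + A % r ^ D := by rw [h3]
        _ = r ^ (D + 1) * (A / r ^ D / r) + (A / r ^ D % r * r ^ D + A % r ^ D) := by ring
    have h4 : A / r ^ D % r * r ^ D + A % r ^ D < r ^ (D + 1) := by
      have h5 : A / r ^ D % r ≤ r - 1 := by
        have := Nat.mod_lt (A / r ^ D) (show 0 < r by omega); omega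
      have h6 : A % r ^ D < r ^ D := Nat.mod_lt _ hp
      calc A / r ^ D % r * r ^ D + A % r ^ D
          ≤ (r - 1) * r ^ D + A % r ^ D := Nat.add_le_add (Nat.mul_le_mul_right _ h5) le_rfl
        _ < (r - 1) * r ^ D + r ^ D := by omega
        _ = ((r - 1) + 1) * r ^ D := by ring
        _ = r ^ (D + 1) := by rw [Nat.sub_add_cancel (by omega)]; ring
    have key : A % r ^ (D + 1) = A / r ^ D % r * r ^ D + A % r ^ D := by
      calc A % r ^ (D + 1)
          = (r ^ (D + 1) * (A / r ^ D / r) + (A / r ^ D % r * r ^ D + A % r ^ D)) % r ^ (D + 1) := by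
            rw [← h1]
        _ = (A / r ^ D % r * r ^ D + A % r ^ D) % r ^ (D + 1) := by rw [Nat.mul_add_mod]
        _ = A / r ^ D % r * r ^ D + A % r ^ D := Nat.mod_eq_of_lt h4
    rw [key]; ring

/-- greedy digit extraction step -/
noncomputable def fm_gstep (r : ℕ) (s : ℝ) : ℤ := max (-((r : ℤ) - 1)) (min ((r : ℤ) - 1) ⌊s * r⌋)

/-- greedy residual sequence -/
noncomputable def fm_gseq (r : ℕ) (s : ℝ) : ℕ → ℝ
  | 0 => s
  | i + 1 => fm_gseq r s i * r - fm_gstep r (fm_gseq r s i)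

lemma fm_abs_gstep_le (r : ℕ) (hr : 2 ≤ r) (s : ℝ) : |fm_gstep r s| ≤ (r : ℤ) - 1 := by
  have h1 : (2 : ℤ) ≤ r := by exact_mod_cast hr
  rw [abs_le, fm_gstep]
  constructor
  · exact le_max_left _ _
  · exact max_le (by omega) (min_le_left _ _)

lemma fm_abs_step_residual (r : ℕ) (hr : 2 ≤ r) (t : ℝ) (ht : |t| ≤ 1) :
    |t * r - fm_gstep r t| ≤ 1 := by
  have hrZ : (2 : ℤ) ≤ r := by exact_mod_cast hr
  have hrR : (2 : ℝ) ≤ r := by exact_mod_cast hr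
  have htr : |t * r| ≤ r := by
    rw [abs_mul, abs_of_nonneg (by linarith : (0:ℝ) ≤ r)]
    nlinarith [abs_nonneg t, abs_le.mp ht]
  rw [abs_le] at htr
  rcases le_or_gt ⌊t * r⌋ (-(r : ℤ)) with h1 | h1
  · have hg : fm_gstep r t = -((r : ℤ) - 1) := by
      rw [fm_gstep, min_eq_right (by omega), max_eq_left (by omega)]
    have h2 : t * r < (⌊t * r⌋ : ℝ) + 1 := Int.lt_floor_add_one _
    have h3 : ((⌊t * r⌋ : ℤ) : ℝ) ≤ -(r : ℝ) := by exact_mod_cast Int.cast_le.mpr h1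
    rw [hg, abs_le]
    push_cast
    constructor <;> linarith [htr.1]
  · rcases le_or_gt ((r : ℤ)) ⌊t * r⌋ with h2 | h2
    · have hg : fm_gstep r t = (r : ℤ) - 1 := by
        rw [fm_gstep, min_eq_left (by omega), max_eq_right (by omega)]
      have h3 : (r : ℝ) ≤ t * r := by exact_mod_cast Int.le_floor.mp h2
      rw [hg, abs_le]
      push_cast
      constructor <;> linarith [htr.2]
    · have hg : fm_gstep r t = ⌊t * r⌋ := by
        rw [fm_gstep, min_eq_right (by omega), max_eq_right (by omega)]
      rw [hg, abs_le]
      have h4 : (0:ℝ) ≤ t * r - ⌊t * r⌋ := by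
        have := Int.floor_le (t * r); linarith
      have h5 : t * r - ⌊t * r⌋ < 1 := by
        have := Int.lt_floor_add_one (t * r); linarith
      constructor <;> linarith

lemma fm_abs_gseq_le (r : ℕ) (hr : 2 ≤ r) (s : ℝ) (hs : |s| ≤ 1) :
    ∀ i, |fm_gseq r s i| ≤ 1 := by
  intro i
  induction i with
  | zero => exact hs
  | succ i ih => exact fm_abs_step_residual r hr _ ih

lemma fm_gseq_sum (r : ℕ) (hr : 2 ≤ r) (s : ℝ) :
    ∀ N : ℕ, ∑ i ∈ range N, (fm_gstep r (fm_gseq r s i) : ℝ) * (r : ℝ) ^ (-(i + 1 : ℤ))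
      + fm_gseq r s N * (r : ℝ) ^ (-(N : ℤ)) = s := by
  have hr0 : (r : ℝ) ≠ 0 := by positivity
  intro N
  induction N with
  | zero => simp [fm_gseq]
  | succ N ih =>
    rw [Finset.sum_range_succ]
    have hg : fm_gseq r s (N + 1) = fm_gseq r s N * r - fm_gstep r (fm_gseq r s N) := rfl
    have hexp : (r : ℝ) ^ (-((N + 1 : ℕ) : ℤ)) = (r : ℝ) ^ (-((N : ℤ) + 1)) := by push_cast; ring_nf
    have hz2 : (r : ℝ) ^ (-((N : ℤ) + 1)) * (r : ℝ) = (r : ℝ) ^ (-(N : ℤ)) := by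
      have h := zpow_add₀ hr0 (-((N : ℤ) + 1)) 1
      rw [zpow_one] at h
      rw [← h]; norm_num
    rw [hg, hexp]
    have key : (fm_gstep r (fm_gseq r s N) : ℝ) * (r : ℝ) ^ (-((N : ℤ) + 1))
        + (fm_gseq r s N * r - fm_gstep r (fm_gseq r s N)) * (r : ℝ) ^ (-((N : ℤ) + 1))
        = fm_gseq r s N * (r : ℝ) ^ (-(N : ℤ)) := by
      calc (fm_gstep r (fm_gseq r s N) : ℝ) * (r : ℝ) ^ (-((N : ℤ) + 1))
          + (fm_gseq r s N * r - fm_gstep r (fm_gseq r s N)) * (r : ℝ) ^ (-((N : ℤ) + 1))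
          = fm_gseq r s N * ((r : ℝ) ^ (-((N : ℤ) + 1)) * r) := by ring
        _ = fm_gseq r s N * (r : ℝ) ^ (-(N : ℤ)) := by rw [hz2]
    linarith [ih, key]

lemma fm_gseq_hasSum (r : ℕ) (hr : 2 ≤ r) (s : ℝ) (hs : |s| ≤ 1) :
    HasSum (fun i : ℕ => (fm_gstep r (fm_gseq r s i) : ℝ) * (r : ℝ) ^ (-(i + 1 : ℤ))) s := by
  have hrR : (2 : ℝ) ≤ r := by exact_mod_cast hr
  have hr0 : (0 : ℝ) < r := by linarith
  have hinv : (1 : ℝ) / r < 1 := by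
    rw [div_lt_one hr0]; linarith
  have hinv0 : (0 : ℝ) ≤ 1 / r := by positivity
  set f : ℕ → ℝ := fun i => (fm_gstep r (fm_gseq r s i) : ℝ) * (r : ℝ) ^ (-(i + 1 : ℤ)) with hf
  have hbound : ∀ i, ‖f i‖ ≤ (1 / (r : ℝ)) ^ i := by
    intro i
    have hstep : |(fm_gstep r (fm_gseq r s i) : ℝ)| ≤ (r : ℝ) := by
      have := fm_abs_gstep_le r hr (fm_gseq r s i)
      have h2 : |(fm_gstep r (fm_gseq r s i) : ℝ)| ≤ (r : ℝ) - 1 := by exact_mod_cast this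
      linarith
    have hzpos : (0:ℝ) < (r : ℝ) ^ (-(i + 1 : ℤ)) := by positivity
    rw [hf]
    simp only [Real.norm_eq_abs, abs_mul, abs_of_pos hzpos]
    calc |(fm_gstep r (fm_gseq r s i) : ℝ)| * (r : ℝ) ^ (-(i + 1 : ℤ))
        ≤ (r : ℝ) * (r : ℝ) ^ (-(i + 1 : ℤ)) := by
          exact mul_le_mul_of_nonneg_right hstep hzpos.le
      _ = (r : ℝ) ^ (1 + -(i + 1 : ℤ)) := by
          rw [zpow_add₀ (ne_of_gt hr0), zpow_one]
      _ = (1 / (r : ℝ)) ^ i := by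
          rw [show (1 : ℤ) + -(i + 1 : ℤ) = -(i : ℤ) by ring]
          rw [zpow_neg, zpow_natCast, one_div, inv_pow]
  have hsummable : Summable f := Summable.of_norm_bounded (summable_geometric_of_lt_one hinv0 hinv) hbound
  have h1 : HasSum f (∑' i, f i) := hsummable.hasSum
  have h2 := h1.tendsto_sum_nat
  have h3 : Tendsto (fun N : ℕ => ∑ i ∈ range N, f i) atTop (nhds s) := by
    have heq : ∀ N : ℕ, ∑ i ∈ range N, f i = s - fm_gseq r s N * (r : ℝ) ^ (-(N : ℤ)) := by
      intro N
      have := fm_gseq_sum r hr s N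
      linarith
    simp only [heq]
    have htail : Tendsto (fun N : ℕ => fm_gseq r s N * (r : ℝ) ^ (-(N : ℤ))) atTop (nhds 0) := by
      apply squeeze_zero_norm (fun N => ?_) (tendsto_pow_atTop_nhds_zero_of_lt_one hinv0 hinv)
      have hzpos : (0:ℝ) < (r : ℝ) ^ (-(N : ℤ)) := by positivity
      simp only [Real.norm_eq_abs, abs_mul, abs_of_pos hzpos]
      calc |fm_gseq r s N| * (r : ℝ) ^ (-(N : ℤ))
          ≤ 1 * (r : ℝ) ^ (-(N : ℤ)) :=
            mul_le_mul_of_nonneg_right (fm_abs_gseq_le r hr s hs N) hzpos.le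
        _ = (1 / (r : ℝ)) ^ N := by
            rw [one_mul, zpow_neg, zpow_natCast, one_div, inv_pow]
    have := Tendsto.const_sub s htail
    simpa using this
  have h4 : ∑' i, f i = s := tendsto_nhds_unique h2 h3
  rwa [h4] at h1

/-- Theorem 1 of the paper, vector case: a sequence in `ℝ^m` (with
the sup norm) that is Fejér monotone with respect to the point `x` develops `D`
stable most-significant digits in every coordinate, in the symmetric maximally
redundant signed-digit radix-`r` representation, once an element comes within
`r^(-D)/2` of `x` in the sup norm. -/
theorem fejer_monotone_digit_stability_vector
    (r D m : ℕ) (hr : 2 ≤ r) (hD : 1 ≤ D) (hm : 1 ≤ m)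
    (x : ℕ → (Fin m → ℝ)) (xs : Fin m → ℝ)
    (hfejer : ∀ k : ℕ, ‖x (k + 1) - xs‖ ≤ ‖x k - xs‖)
    (hxs : ∀ j : Fin m, |xs j| ≤ 1 - 2 * (r : ℝ) ^ (-(D : ℤ)))
    (n : ℕ) (hn : ‖x n - xs‖ ≤ (r : ℝ) ^ (-(D : ℤ)) / 2) :
    ∀ j : Fin m, ∃ d : ℕ → ℕ → ℤ, ∀ k : ℕ, n ≤ k →
      (∀ i, |d k i| ≤ (r : ℤ) - 1) ∧
      HasSum (fun i : ℕ => (d k i : ℝ) * (r : ℝ) ^ (-(i + 1 : ℤ))) (x k j) ∧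
      (∀ i < D, d k i = d n i) := by
  intro j
  have hrR : (2 : ℝ) ≤ r := by exact_mod_cast hr
  have hr0 : (0 : ℝ) < r := by linarith
  have hrne : (r : ℝ) ≠ 0 := ne_of_gt hr0
  set P : ℝ := (r : ℝ) ^ (D : ℕ) with hP
  have hPpos : 0 < P := by positivity
  have hPinv : (r : ℝ) ^ (-(D : ℤ)) = P⁻¹ := by
    rw [zpow_neg, zpow_natCast]
  -- monotonicity of distances
  have hmono : ∀ k, n ≤ k → ‖x k - xs‖ ≤ ‖x n - xs‖ := by
    intro k hk
    induction k with
    | zero => simp_all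
    | succ k ih =>
      rcases Nat.lt_or_ge n (k + 1) with h | h
      · exact le_trans (hfejer k) (ih (by omega))
      · have : n = k + 1 := by omega
        subst this; exact le_rfl
  -- per-coordinate closeness for k ≥ n
  have hclose : ∀ k, n ≤ k → |x k j - xs j| ≤ P⁻¹ / 2 := by
    intro k hk
    have h1 : |x k j - xs j| = ‖(x k - xs) j‖ := by simp [Real.norm_eq_abs]
    rw [h1]
    calc ‖(x k - xs) j‖ ≤ ‖x k - xs‖ := norm_le_pi_norm _ j
      _ ≤ ‖x n - xs‖ := hmono k hk
      _ ≤ (r : ℝ) ^ (-(D : ℤ)) / 2 := hn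
      _ = P⁻¹ / 2 := by rw [hPinv]
  -- the rounded approximation of xs j
  set N : ℤ := round (xs j * P) with hN
  have hround : |xs j * P - N| ≤ 1 / 2 := abs_sub_round _
  have hxsj := hxs j
  rw [hPinv] at hxsj
  -- |N| < r ^ D
  have hAbound : N.natAbs < r ^ D := by
    have h1 : |(N : ℝ)| ≤ |xs j * P| + 1 / 2 := by
      have := abs_sub_abs_le_abs_sub (N : ℝ) (xs j * P)
      have h2 : |xs j * P - (N:ℝ)| = |(N:ℝ) - xs j * P| := abs_sub_comm _ _
      linarith [hround, abs_sub_abs_le_abs_sub (N : ℝ) (xs j * P), h2 ▸ hround]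
    have h2 : |xs j * P| ≤ (1 - 2 * P⁻¹) * P := by
      rw [abs_mul, abs_of_pos hPpos]
      apply mul_le_mul_of_nonneg_right hxsj hPpos.le
    have h3 : (1 - 2 * P⁻¹) * P = P - 2 := by
      field_simp
    have h4 : |(N : ℝ)| < P := by
      rw [h3] at h2; linarith
    have h5 : |N| < ((r ^ D : ℕ) : ℤ) := by
      have h6 : |(N : ℝ)| < ((r ^ D : ℕ) : ℝ) := by push_cast; exact h4
      exact_mod_cast h6
    rw [Int.abs_eq_natAbs] at h5
    exact_mod_cast h5
  set A : ℕ := N.natAbs with hA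
  -- most significant digits
  set mdig : ℕ → ℤ := fun i => N.sign * ((A / r ^ i % r : ℕ) : ℤ) with hmdig
  have hmdig_bound : ∀ i, |mdig i| ≤ (r : ℤ) - 1 := by
    intro i
    have h1 : (A / r ^ i % r : ℕ) < r := Nat.mod_lt _ (by omega)
    have h2 : ((A / r ^ i % r : ℕ) : ℤ) ≤ (r : ℤ) - 1 := by
      have : ((A / r ^ i % r : ℕ) : ℤ) < (r : ℤ) := by exact_mod_cast h1
      omega
    have h3 : |N.sign| ≤ 1 := by
      rcases eq_or_ne N 0 with h | h
      · simp [h]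
      · rw [Int.abs_sign_of_ne_zero h]
    calc |mdig i| = |N.sign| * |((A / r ^ i % r : ℕ) : ℤ)| := abs_mul _ _
      _ ≤ 1 * ((r : ℤ) - 1) := by
          apply mul_le_mul h3 (by rwa [abs_of_nonneg (by positivity)]) (abs_nonneg _) (by norm_num)
      _ = (r : ℤ) - 1 := one_mul _
  -- sum of most significant digits equals N
  have hmsd_int : ∑ i ∈ range D, mdig i * (r : ℤ) ^ i = N := by
    have h1 : ∑ i ∈ range D, ((A / r ^ i % r * r ^ i : ℕ) : ℤ) = (A : ℤ) := by
      rw [← Nat.cast_sum]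
      rw [fm_digit_sum r hr D A, Nat.mod_eq_of_lt hAbound]
    calc ∑ i ∈ range D, mdig i * (r : ℤ) ^ i
        = N.sign * ∑ i ∈ range D, ((A / r ^ i % r * r ^ i : ℕ) : ℤ) := by
          rw [Finset.mul_sum]
          apply Finset.sum_congr rfl
          intro i _
          rw [Nat.cast_mul, Nat.cast_pow]
          ring
      _ = N.sign * (A : ℤ) := by rw [h1]
      _ = N := Int.sign_mul_natAbs N
  -- sum of most significant digit terms in ℝ
  have hmsd_real : ∑ i ∈ range D, (mdig (D - 1 - i) : ℝ) * (r : ℝ) ^ (-(i + 1 : ℤ)) = N * P⁻¹ := by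
    have hcongr : ∀ i ∈ range D,
        (mdig (D - 1 - i) : ℝ) * (r : ℝ) ^ (-(i + 1 : ℤ))
        = ((mdig (D - 1 - i) : ℝ) * (r : ℝ) ^ (D - 1 - i : ℕ)) * P⁻¹ := by
      intro i hi
      have hiD : i < D := Finset.mem_range.mp hi
      have hsum : (D - 1 - i : ℕ) + (i + 1) = D := by omega
      have hre : (r : ℝ) ^ (-(i + 1 : ℤ)) = (r : ℝ) ^ (D - 1 - i : ℕ) * P⁻¹ := by
        have h7 : (r : ℝ) ^ (D - 1 - i : ℕ) * (r : ℝ) ^ (i + 1 : ℕ) = P := by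
          rw [hP, ← pow_add, hsum]
        have h8 : (r : ℝ) ^ (-(i + 1 : ℤ)) = ((r : ℝ) ^ (i + 1 : ℕ))⁻¹ := by
          rw [← zpow_natCast (r : ℝ) (i + 1), ← zpow_neg]
          norm_num
        rw [h8, ← h7, mul_inv, ← mul_assoc,
          mul_inv_cancel₀ (ne_of_gt (by positivity : (0:ℝ) < (r : ℝ) ^ (D - 1 - i : ℕ))), one_mul]
      rw [hre]; ring
    rw [Finset.sum_congr rfl hcongr, ← Finset.sum_mul]
    have hrefl := Finset.sum_range_reflect (fun i => (mdig i : ℝ) * (r : ℝ) ^ i) D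
    rw [hrefl]
    have : ∑ i ∈ range D, (mdig i : ℝ) * (r : ℝ) ^ i = (N : ℝ) := by
      exact_mod_cast congrArg (Int.cast : ℤ → ℝ) hmsd_int
    rw [this]
  -- residual scaled to [-1,1]
  have hPne : P ≠ 0 := ne_of_gt hPpos
  set sres : ℕ → ℝ := fun k => (x k j - N * P⁻¹) * P with hsres
  have hsres_bound : ∀ k, n ≤ k → |sres k| ≤ 1 := by
    intro k hk
    have h1 : |xs j - N * P⁻¹| ≤ P⁻¹ / 2 := by
      have h3 : |xs j * P - N| = |xs j - N * P⁻¹| * P := by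
        have h4 : xs j * P - N = (xs j - N * P⁻¹) * P := by field_simp
        rw [h4, abs_mul, abs_of_pos hPpos]
      nlinarith [hround, hPpos, inv_mul_cancel₀ hPne, abs_nonneg (xs j - N * P⁻¹)]
    have h4 := hclose k hk
    have h5 : |x k j - N * P⁻¹| ≤ P⁻¹ := by
      calc |x k j - N * P⁻¹| = |(x k j - xs j) + (xs j - N * P⁻¹)| := by ring_nf
        _ ≤ |x k j - xs j| + |xs j - N * P⁻¹| := abs_add_le _ _
        _ ≤ P⁻¹ / 2 + P⁻¹ / 2 := add_le_add h4 h1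
        _ = P⁻¹ := by ring
    rw [hsres]
    simp only []
    rw [abs_mul, abs_of_pos hPpos]
    calc |x k j - N * P⁻¹| * P ≤ P⁻¹ * P := mul_le_mul_of_nonneg_right h5 hPpos.le
      _ = 1 := inv_mul_cancel₀ hPne
  refine ⟨fun k i => if i < D then mdig (D - 1 - i)
    else fm_gstep r (fm_gseq r (sres k) (i - D)), ?_⟩
  intro k hk
  have hsk := hsres_bound k hk
  refine ⟨?_, ?_, ?_⟩
  · intro i
    by_cases hi : i < D
    · simpa [hi] using hmdig_bound (D - 1 - i)
    · simpa [hi] using fm_abs_gstep_le r hr (fm_gseq r (sres k) (i - D))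
  · set f : ℕ → ℝ := fun i =>
      ((if i < D then mdig (D - 1 - i) else fm_gstep r (fm_gseq r (sres k) (i - D)) : ℤ) : ℝ)
        * (r : ℝ) ^ (-(i + 1 : ℤ)) with hfdef
    have htail : HasSum (fun i : ℕ => f (i + D)) (sres k * P⁻¹) := by
      have h1 := (fm_gseq_hasSum r hr (sres k) hsk).mul_right P⁻¹
      have heq : ∀ i : ℕ, f (i + D)
          = (fm_gstep r (fm_gseq r (sres k) i) : ℝ) * (r : ℝ) ^ (-(i + 1 : ℤ)) * P⁻¹ := by
        intro i
        have h2 : ¬ (i + D < D) := by omega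
        have h3 : i + D - D = i := by omega
        have h4 : (r : ℝ) ^ (-(((i + D : ℕ) : ℤ) + 1)) = (r : ℝ) ^ (-(i + 1 : ℤ)) * P⁻¹ := by
          rw [← hPinv, ← zpow_add₀ hrne]
          congr 1
          push_cast
          ring
        rw [hfdef]
        simp only [h2, if_false, h3]
        rw [h4]
        ring
      simpa only [heq] using h1
    have hfull := (hasSum_nat_add_iff (f := f) D).mp htail
    have hsumD : ∑ i ∈ range D, f i = N * P⁻¹ := by
      rw [← hmsd_real]
      apply Finset.sum_congr rfl
      intro i hi
      have hiD : i < D := Finset.mem_range.mp hi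
      simp [hfdef, hiD]
    have hval : sres k * P⁻¹ + (N : ℝ) * P⁻¹ = x k j := by
      rw [hsres]
      simp only []
      field_simp
      ring
    rw [hsumD, hval] at hfull
    exact hfull
  · intro i hiD
    simp [hiD]
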